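/- Let A, B, C, D be real numbers with 4B−A²−C² > 0 and 2D−AC ≠ 0. Set K=(4B−A²+C²)²+4(2D−AC)², H=(1/2)(−4B+A²−C²+√K), a_± = A ± √H, and b_± = (1/4){A²+C²+√K ± (2AH−2C(2D−AC))/√H}. Then H > 0, 4b₊ − a₊² > 0, 4b₋ − a₋² > 0, and for every real t, (t²+At+B)² + (Ct+D)² = (t²+a₊t+b₊)(t²+a₋t+b₋). -/

import Mathlib

noncomputable section

/-- The quartic `(t² + At + B)² + (Ct + D)²` factors as the product of the two quadratics
`t² + a₊t + b₊` and `t² + a₋t + b₋`, which have negative discriminants. -/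
theorem quartic_factorization (A B C D K H ap am bp bm : ℝ)
    (hK : K = (4 * B - A ^ 2 + C ^ 2) ^ 2 + 4 * (2 * D - A * C) ^ 2)
    (hH : H = (1 / 2) * (-(4 * B) + A ^ 2 - C ^ 2 + Real.sqrt K))
    (hap : ap = A + Real.sqrt H) (ham : am = A - Real.sqrt H)
    (hbp : bp = (1 / 4) * (A ^ 2 + C ^ 2 + Real.sqrt K +
      (2 * A * H - 2 * C * (2 * D - A * C)) / Real.sqrt H))
    (hbm : bm = (1 / 4) * (A ^ 2 + C ^ 2 + Real.sqrt K -
      (2 * A * H - 2 * C * (2 * D - A * C)) / Real.sqrt H))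
    (hpos : 0 < 4 * B - A ^ 2 - C ^ 2) (hne : 2 * D - A * C ≠ 0) :
    0 < H ∧ 0 < 4 * bp - ap ^ 2 ∧ 0 < 4 * bm - am ^ 2 ∧
      ∀ t : ℝ, (t ^ 2 + A * t + B) ^ 2 + (C * t + D) ^ 2 =
        (t ^ 2 + ap * t + bp) * (t ^ 2 + am * t + bm) := by
  have hF2 : 0 < (2 * D - A * C) ^ 2 := by positivity
  have hKpos : 0 < K := by nlinarith [sq_nonneg (4 * B - A ^ 2 + C ^ 2)]
  have hsK : Real.sqrt K ^ 2 = K := Real.sq_sqrt hKpos.le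
  have hsKnn : 0 ≤ Real.sqrt K := Real.sqrt_nonneg K
  have hElt : 4 * B - A ^ 2 + C ^ 2 < Real.sqrt K := by
    nlinarith [hsK, hsKnn, hF2]
  have hHpos : 0 < H := by rw [hH]; linarith
  set s := Real.sqrt H with hs
  have hs2 : s ^ 2 = H := Real.sq_sqrt hHpos.le
  have hspos : 0 < s := Real.sqrt_pos.mpr hHpos
  have hsne : s ≠ 0 := ne_of_gt hspos
  have hKeq : Real.sqrt K = 2 * H + (4 * B - A ^ 2 + C ^ 2) := by linarith [hH]
  have hHF : H * (H + (4 * B - A ^ 2 + C ^ 2)) = (2 * D - A * C) ^ 2 := by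
    have h := hsK
    rw [hKeq, hK] at h
    linear_combination (1 / 4) * h
  have eqp : 4 * bp - ap ^ 2 = (C - (2 * D - A * C) / s) ^ 2 := by
    rw [hbp, hap, hKeq]
    field_simp
    linear_combination (H + (4 * B - A ^ 2 + C ^ 2) - s ^ 2 - 2 * A * s) * hs2 + hHF
  have eqm : 4 * bm - am ^ 2 = (C + (2 * D - A * C) / s) ^ 2 := by
    rw [hbm, ham, hKeq]
    field_simp
    linear_combination (H + (4 * B - A ^ 2 + C ^ 2) - s ^ 2 + 2 * A * s) * hs2 + hHF
  have hC2 : ¬ (C ^ 2 * H = (2 * D - A * C) ^ 2) := by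
    intro h
    rw [← hHF] at h
    have : C ^ 2 = H + (4 * B - A ^ 2 + C ^ 2) :=
      mul_right_cancel₀ (ne_of_gt hHpos)
        (by linarith [h] : C ^ 2 * H = (H + (4 * B - A ^ 2 + C ^ 2)) * H)
    nlinarith [sq_nonneg C]
  have hnep : C - (2 * D - A * C) / s ≠ 0 := by
    intro h
    apply hC2
    have hcs : C * s = 2 * D - A * C := by
      field_simp at h
      linarith [h]
    linear_combination (C * s + (2 * D - A * C)) * hcs - C ^ 2 * hs2
  have hnem : C + (2 * D - A * C) / s ≠ 0 := by
    intro h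
    apply hC2
    have hcs : C * s = -(2 * D - A * C) := by
      field_simp at h
      linarith [h]
    linear_combination (C * s - (2 * D - A * C)) * hcs - C ^ 2 * hs2
  refine ⟨hHpos, by rw [eqp]; positivity, by rw [eqm]; positivity, ?_⟩
  have e1 : ap + am = 2 * A := by rw [hap, ham]; ring
  have e2 : bp + bm + ap * am = A ^ 2 + 2 * B + C ^ 2 := by
    rw [hbp, hbm, hap, ham, hKeq]
    have h : (A + s) * (A - s) = A ^ 2 - H := by linear_combination -hs2
    rw [h]; ring
  have e3 : ap * bm + am * bp = 2 * A * B + 2 * C * D := by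
    rw [hbp, hbm, hap, ham, hKeq]
    field_simp
    ring
  have e4 : bp * bm = B ^ 2 + D ^ 2 := by
    rw [hbp, hbm, hKeq]
    field_simp
    linear_combination ((2 * C ^ 2 + 4 * B + 2 * H) ^ 2 - 16 * (B ^ 2 + D ^ 2)) * hs2 +
      4 * (C ^ 2 + H) * hHF
  intro t
  linear_combination (-(t ^ 3)) * e1 - t ^ 2 * e2 - t * e3 - e4
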